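/- Let ε : [t₀,∞) → (0,∞) be continuously differentiable with ε²(t) + ε'(t) ≥ 0 for all t ≥ t₊ for some t₊ ≥ t₀. Then ∫_{t₊}^∞ ε(τ)dτ = +∞. -/

import Mathlib

open MeasureTheory Set

theorem stmt2 (t₀ tp : ℝ) (ht : t₀ ≤ tp) (ε ε' : ℝ → ℝ)
    (hεpos : ∀ t ∈ Ici t₀, 0 < ε t)
    (hderiv : ∀ t ∈ Ici t₀, HasDerivAt ε (ε' t) t)
    (hcont : ContinuousOn ε' (Ici t₀))
    (hcond : ∀ t ∈ Ici tp, ε t ^ 2 + ε' t ≥ 0) :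
    ¬ IntegrableOn ε (Ici tp) := by
  intro hint
  set c : ℝ := (ε tp)⁻¹ with hc
  have htpt₀ : tp ∈ Ici t₀ := ht
  have hεtp : 0 < ε tp := hεpos tp htpt₀
  have hcpos : 0 < c := inv_pos.2 hεtp
  -- g t = (ε t)⁻¹ - (t - tp) is antitone on Ici tp
  set g : ℝ → ℝ := fun t => (ε t)⁻¹ - (t - tp) with hg
  have hmem : ∀ x ∈ Ici tp, x ∈ Ici t₀ := fun x hx => le_trans ht hx
  have hgderiv : ∀ x ∈ Ici tp, HasDerivAt g (-(ε' x) / (ε x) ^ 2 - 1) x := by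
    intro x hx
    have h1 : HasDerivAt (fun t => (ε t)⁻¹) (-(ε' x) / (ε x) ^ 2) x :=
      (hderiv x (hmem x hx)).inv (ne_of_gt (hεpos x (hmem x hx)))
    exact h1.sub ((hasDerivAt_id x).sub_const tp)
  have hgcont : ContinuousOn g (Ici tp) := fun x hx =>
    (hgderiv x hx).continuousAt.continuousWithinAt
  have hanti : AntitoneOn g (Ici tp) := by
    apply antitoneOn_of_deriv_nonpos (convex_Ici tp) hgcont
    · intro x hx
      rw [interior_Ici] at hx
      exact ((hgderiv x (mem_Ici.2 (le_of_lt (mem_Ioi.1 hx)))).differentiableAt).differentiableWithinAt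
    · intro x hx
      rw [interior_Ici] at hx
      have hx' : x ∈ Ici tp := mem_Ici.2 (le_of_lt (mem_Ioi.1 hx))
      rw [(hgderiv x hx').deriv]
      have hε2 : 0 < (ε x) ^ 2 := pow_pos (hεpos x (hmem x hx')) 2
      rw [sub_nonpos, div_le_one hε2]
      nlinarith [hcond x hx']
  -- hence ε t ≥ (t - tp + c)⁻¹ on Ici tp
  have hlb : ∀ t ∈ Ici tp, (t - tp + c)⁻¹ ≤ ε t := by
    intro t htmem
    have h1 : g t ≤ g tp := hanti (mem_Ici.2 le_rfl) htmem htmem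
    have h2 : (ε t)⁻¹ ≤ t - tp + c := by
      simp only [hg, hc] at h1 ⊢
      linarith
    have hεt : 0 < ε t := hεpos t (hmem t htmem)
    calc (t - tp + c)⁻¹ ≤ ((ε t)⁻¹)⁻¹ := by
          apply inv_anti₀ (inv_pos.2 hεt) h2
      _ = ε t := inv_inv _
  -- so (t - tp + c)⁻¹ is integrable on Ici tp
  have hmeasf : AEStronglyMeasurable (fun t => (t - tp + c)⁻¹)
      (volume.restrict (Ici tp)) :=
    (((measurable_id.sub_const tp).add_const c).inv).aestronglyMeasurable
  have hint2 : IntegrableOn (fun t => (t - tp + c)⁻¹) (Ici tp) := by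
    refine hint.mono' hmeasf ?_
    filter_upwards [ae_restrict_mem measurableSet_Ici] with t htmem
    have h0 : 0 < t - tp + c := by
      have : tp ≤ t := htmem
      linarith
    rw [Real.norm_eq_abs, abs_of_pos (inv_pos.2 h0)]
    exact hlb t htmem
  -- transfer to inv on Ici c, contradiction
  have hmp : MeasurePreserving (fun x : ℝ => x + (c - tp)) volume volume :=
    measurePreserving_add_right volume (c - tp)
  have hemb : MeasurableEmbedding (fun x : ℝ => x + (c - tp)) :=
    (MeasurableEquiv.addRight (c - tp)).measurableEmbedding
  have := (hmp.integrableOn_comp_preimage hemb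
    (f := fun x : ℝ => x⁻¹) (s := Ici c)).2
  have hpre : (fun x : ℝ => x + (c - tp)) ⁻¹' (Ici c) = Ici tp := by
    ext x; simp only [mem_preimage, mem_Ici]; constructor <;> intro h <;> linarith
  apply not_IntegrableOn_Ici_inv (a := c)
  have h3 : IntegrableOn ((fun x : ℝ => x⁻¹) ∘ fun x => x + (c - tp)) (Ici tp) := by
    apply hint2.congr_fun _ measurableSet_Ici
    intro x _
    simp [Function.comp]
    ring_nf
  rw [← hpre] at h3
  exact (hmp.integrableOn_comp_preimage hemb).1 h3
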